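/- For an Eulerian poset P of rank d ≥ 0, one has t^d G(P, t^{−1}) = Σ_{0̂ ≤ x ≤ 1̂} (t−1)^{ρ(x)} G([x, 1̂], t). -/

import Mathlib

open Finset Polynomial
open scoped Classical

/-- The defining recursion of the Möbius function of a finite poset. -/
def MobiusRec {P : Type*} [PartialOrder P] [Fintype P] (mu : P → P → ℤ) : Prop :=
  (∀ x : P, mu x x = 1) ∧
    ∀ x y : P, x < y → (∑ z : P, if x ≤ z ∧ z ≤ y then mu x z else 0) = 0

/-- A finite poset with rank function `ρ` is Eulerian if its Möbius function satisfies
`μ(x,y) = (-1)^(ρ(y) - ρ(x))` for all `x ≤ y`. -/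
def IsEulerian {P : Type*} [PartialOrder P] [Fintype P] (ρ : P → ℕ) : Prop :=
  ∀ mu : P → P → ℤ, MobiusRec mu → ∀ x y : P, x ≤ y → mu x y = (-1 : ℤ) ^ (ρ y - ρ x)

/-- `ρ` is a rank function of rank `d`: `ρ(⊥) = 0`, `ρ(⊤) = d`, `ρ` is monotone and
increases by one along covering relations. -/
def IsRankFunction {P : Type*} [PartialOrder P] [BoundedOrder P] (ρ : P → ℕ) (d : ℕ) : Prop :=
  ρ ⊥ = 0 ∧ ρ ⊤ = d ∧ Monotone ρ ∧ ∀ x y : P, x ⋖ y → ρ y = ρ x + 1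

/-- The truncation operator `τ_{< d/2}`, keeping only the terms of degree `< d/2`
(that is, `2*i < d`). -/
noncomputable def truncLtHalf (d : ℕ) (p : Polynomial ℤ) : Polynomial ℤ :=
  ∑ i ∈ Finset.range (p.natDegree + 1),
    if 2 * i < d then Polynomial.C (p.coeff i) * Polynomial.X ^ i else 0

/-- Stanley's polynomials `G([x,y],t)` and `H([x,y],t)` of the intervals of a finite graded
poset `P` with rank function `ρ`, given by the recursion: `G = H = 1` on rank-0 intervals,
`H([x,y],t) = ∑_{x < z ≤ y} (t-1)^(ρ(z)-ρ(x)-1) G([z,y],t)`, and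
`G([x,y],t) = τ_{< (ρ(y)-ρ(x))/2} ((1-t) H([x,y],t))`. -/
def GHSystem {P : Type*} [PartialOrder P] [Fintype P] (ρ : P → ℕ)
    (G H : P → P → Polynomial ℤ) : Prop :=
  (∀ x : P, G x x = 1 ∧ H x x = 1) ∧
  (∀ x y : P, x < y →
      H x y = ∑ z : P,
        if x < z ∧ z ≤ y then (Polynomial.X - 1) ^ (ρ z - ρ x - 1) * G z y else 0) ∧
  (∀ x y : P, x < y → G x y = truncLtHalf (ρ y - ρ x) ((1 - Polynomial.X) * H x y))

/-! ### Auxiliary material -/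

/-- The Möbius function of a finite poset, constructed by well-founded recursion. -/
noncomputable def muF {P : Type*} [PartialOrder P] [Fintype P] (x : P) : P → ℤ :=
  (Finite.to_wellFoundedLT (α := P)).wf.fix
    (fun y rec => if x = y then 1 else
      - ∑ z : P, if h : x ≤ z ∧ z < y then rec z h.2 else 0)

lemma muF_def {P : Type*} [PartialOrder P] [Fintype P] (x y : P) :
    muF x y = if x = y then 1 else
      - ∑ z : P, if x ≤ z ∧ z < y then muF x z else 0 := by
  rw [muF, WellFounded.fix_eq]
  rfl

lemma mobiusRec_muF {P : Type*} [PartialOrder P] [Fintype P] :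
    MobiusRec (muF (P := P)) := by
  constructor
  · intro x; rw [muF_def]; simp
  · intro x y hxy
    have h1 : ∀ z : P, (if x ≤ z ∧ z ≤ y then muF x z else 0) =
        (if x ≤ z ∧ z < y then muF x z else 0) + (if z = y then muF x z else 0) := by
      intro z
      rcases eq_or_ne z y with rfl | hz
      · simp [le_of_lt hxy, lt_irrefl]
      · rw [if_neg hz, add_zero]
        by_cases h : x ≤ z ∧ z ≤ y
        · rw [if_pos h, if_pos ⟨h.1, lt_of_le_of_ne h.2 hz⟩]
        · rw [if_neg h, if_neg (by rintro ⟨h1, h2⟩; exact h ⟨h1, le_of_lt h2⟩)]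
    rw [Finset.sum_congr rfl fun z _ => h1 z, Finset.sum_add_distrib]
    rw [Finset.sum_ite_eq' Finset.univ y (muF x)]
    rw [muF_def x y, if_neg (ne_of_lt hxy)]
    simp

/-- The key combinatorial consequence of being Eulerian. -/
lemma eulerian_sum {P : Type*} [PartialOrder P] [Fintype P] {ρ : P → ℕ}
    (hE : IsEulerian ρ) (hsm : ∀ a b : P, a < b → ρ a < ρ b)
    {x y : P} (h : x < y) :
    (∑ z : P, if x < z ∧ z ≤ y then ((-1 : ℤ)) ^ (ρ z - ρ x - 1) else 0) = 1 := by
  have hval := hE muF mobiusRec_muF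
  have h2 := mobiusRec_muF.2 x y h
  have h3 : (∑ z : P, if x ≤ z ∧ z ≤ y then ((-1:ℤ)) ^ (ρ z - ρ x) else 0) = 0 := by
    calc (∑ z : P, if x ≤ z ∧ z ≤ y then ((-1:ℤ)) ^ (ρ z - ρ x) else 0)
        = ∑ z : P, if x ≤ z ∧ z ≤ y then muF x z else 0 := by
          refine Finset.sum_congr rfl fun z _ => ?_
          by_cases hc : x ≤ z ∧ z ≤ y
          · rw [if_pos hc, if_pos hc, hval x z hc.1]
          · rw [if_neg hc, if_neg hc]
      _ = 0 := h2
  have h4 : ∀ z : P, (if x ≤ z ∧ z ≤ y then ((-1:ℤ)) ^ (ρ z - ρ x) else 0) =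
      (if z = x then ((-1:ℤ)) ^ (ρ z - ρ x) else 0) +
      (if x < z ∧ z ≤ y then ((-1:ℤ)) ^ (ρ z - ρ x) else 0) := by
    intro z
    rcases eq_or_ne z x with rfl | hz
    · simp [le_of_lt h, lt_irrefl]
    · rw [if_neg hz, zero_add]
      by_cases hc : x ≤ z ∧ z ≤ y
      · rw [if_pos hc, if_pos ⟨lt_of_le_of_ne hc.1 (Ne.symm hz), hc.2⟩]
      · rw [if_neg hc, if_neg (by rintro ⟨h1', h2'⟩; exact hc ⟨le_of_lt h1', h2'⟩)]
  rw [Finset.sum_congr rfl fun z _ => h4 z, Finset.sum_add_distrib,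
    Finset.sum_ite_eq' Finset.univ x (fun z => ((-1:ℤ)) ^ (ρ z - ρ x))] at h3
  simp only [Finset.mem_univ, if_pos, Nat.sub_self, pow_zero] at h3
  have h5 : ∀ z : P, (if x < z ∧ z ≤ y then ((-1:ℤ)) ^ (ρ z - ρ x) else 0) =
      - (if x < z ∧ z ≤ y then ((-1:ℤ)) ^ (ρ z - ρ x - 1) else 0) := by
    intro z
    by_cases hc : x < z ∧ z ≤ y
    · rw [if_pos hc, if_pos hc]
      have := hsm x z hc.1
      obtain ⟨n, hn⟩ : ∃ n, ρ z - ρ x = n + 1 := ⟨ρ z - ρ x - 1, by omega⟩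
      rw [hn]
      simp [pow_succ]
    · rw [if_neg hc, if_neg hc, neg_zero]
  rw [Finset.sum_congr rfl fun z _ => h5 z, Finset.sum_neg_distrib] at h3
  linarith

lemma rank_strictMono {P : Type*} [PartialOrder P] [Fintype P] {ρ : P → ℕ}
    (hmono : Monotone ρ) (hcov : ∀ x y : P, x ⋖ y → ρ y = ρ x + 1)
    {x y : P} (h : x < y) : ρ x < ρ y := by
  have hp : x < y ∧ y ≤ y := ⟨h, le_rfl⟩
  obtain ⟨b, hb, hbmin⟩ := exists_minimal_le_of_wellFoundedLT (fun z => x < z ∧ z ≤ y) y hp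
  have hcb : x ⋖ b := by
    refine ⟨hbmin.1.1, fun w hw hwb => ?_⟩
    exact absurd (hbmin.2 ⟨hw, le_of_lt (lt_of_lt_of_le hwb hb)⟩ (le_of_lt hwb))
      (not_le_of_gt hwb)
  have := hcov x b hcb
  have := hmono hbmin.1.2
  omega

lemma coeff_truncLtHalf (d : ℕ) (p : Polynomial ℤ) (i : ℕ) :
    (truncLtHalf d p).coeff i = if 2 * i < d then p.coeff i else 0 := by
  rw [truncLtHalf, Polynomial.finset_sum_coeff]
  rw [Finset.sum_eq_single i]
  · by_cases h : 2 * i < d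
    · rw [if_pos h, if_pos h]; simp
    · rw [if_neg h, if_neg h]; simp
  · intro b _ hb
    by_cases h : 2 * b < d
    · rw [if_pos h, Polynomial.coeff_C_mul, Polynomial.coeff_X_pow, if_neg (Ne.symm hb)]
      ring
    · rw [if_neg h, Polynomial.coeff_zero]
  · intro hi
    rw [Finset.mem_range, not_lt] at hi
    have : p.coeff i = 0 := Polynomial.coeff_eq_zero_of_natDegree_lt (by omega)
    by_cases h : 2 * i < d
    · rw [if_pos h]; simp [this]
    · rw [if_neg h, Polynomial.coeff_zero]

lemma reflect_sum' {ι : Type*} (N : ℕ) (s : Finset ι) (f : ι → Polynomial ℤ) :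
    Polynomial.reflect N (∑ i ∈ s, f i) = ∑ i ∈ s, Polynomial.reflect N (f i) := by
  induction s using Finset.induction with
  | empty => simp [Polynomial.reflect_zero]
  | insert _ _ h ih => rw [Finset.sum_insert h, Finset.sum_insert h, Polynomial.reflect_add, ih]

lemma reflect_one_sub_X :
    Polynomial.reflect 1 (1 - Polynomial.X : Polynomial ℤ) = Polynomial.X - 1 := by
  rw [Polynomial.reflect_sub, Polynomial.reflect_one, Polynomial.reflect_one_X]
  ring

lemma reflect_X_sub_one :
    Polynomial.reflect 1 (Polynomial.X - 1 : Polynomial ℤ) = 1 - Polynomial.X := by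
  rw [Polynomial.reflect_sub, Polynomial.reflect_one, Polynomial.reflect_one_X]
  ring

lemma natDegree_X_sub_one_le : (Polynomial.X - 1 : Polynomial ℤ).natDegree ≤ 1 := by
  have : (Polynomial.X - 1 : Polynomial ℤ) = Polynomial.X - Polynomial.C 1 := by simp
  rw [this, Polynomial.natDegree_X_sub_C]

lemma natDegree_one_sub_X_le : (1 - Polynomial.X : Polynomial ℤ).natDegree ≤ 1 := by
  have : (1 - Polynomial.X : Polynomial ℤ) = -(Polynomial.X - Polynomial.C 1) := by
    simp
  rw [this, Polynomial.natDegree_neg, Polynomial.natDegree_X_sub_C]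

lemma natDegree_X_sub_one_pow_le (n : ℕ) :
    ((Polynomial.X - 1 : Polynomial ℤ) ^ n).natDegree ≤ n := by
  calc ((Polynomial.X - 1 : Polynomial ℤ) ^ n).natDegree
      ≤ n * (Polynomial.X - 1 : Polynomial ℤ).natDegree := Polynomial.natDegree_pow_le
    _ ≤ n * 1 := Nat.mul_le_mul_left n natDegree_X_sub_one_le
    _ = n := by omega

lemma reflect_X_sub_one_pow (n : ℕ) :
    Polynomial.reflect n ((Polynomial.X - 1 : Polynomial ℤ) ^ n) = (1 - Polynomial.X) ^ n := by
  induction n with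
  | zero => simp [Polynomial.reflect_one]
  | succ n ih =>
    have h : ((Polynomial.X - 1 : Polynomial ℤ) ^ (n + 1)) =
        (Polynomial.X - 1) * (Polynomial.X - 1) ^ n := by ring
    rw [h, show n + 1 = 1 + n from by omega,
      Polynomial.reflect_mul _ _ natDegree_X_sub_one_le (natDegree_X_sub_one_pow_le n),
      reflect_X_sub_one, ih]
    ring

/-- The main induction: for every `x`, the polynomial `G([x,⊤])` has degree at most
`d - ρ x` and satisfies the reflection formula on the interval `[x,⊤]`. -/
lemma key_induction {P : Type*} [PartialOrder P] [BoundedOrder P] [Fintype P]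
    (ρ : P → ℕ) (d : ℕ) (hrk : IsRankFunction ρ d) (hE : IsEulerian ρ)
    (G H : P → P → Polynomial ℤ) (hGH : GHSystem ρ G H) (x : P) :
    (G x ⊤).natDegree ≤ d - ρ x ∧
      (G x ⊤).reflect (d - ρ x) =
        ∑ z : P, if x ≤ z then (Polynomial.X - 1) ^ (ρ z - ρ x) * G z ⊤ else 0 := by
  obtain ⟨hbot, htop, hmono, hcov⟩ := hrk
  have hsm : ∀ a b : P, a < b → ρ a < ρ b := fun a b => rank_strictMono hmono hcov
  have hled : ∀ z : P, ρ z ≤ d := fun z => htop ▸ hmono le_top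
  induction x using WellFounded.induction (Finite.to_wellFoundedGT (α := P)).wf with
  | _ x IH =>
  by_cases hx : x = ⊤
  · subst hx
    have hG1 : G ⊤ ⊤ = 1 := (hGH.1 ⊤).1
    constructor
    · rw [hG1, Polynomial.natDegree_one]; omega
    · rw [hG1, htop, Nat.sub_self, Polynomial.reflect_one, pow_zero]
      rw [Finset.sum_eq_single ⊤]
      · rw [if_pos le_rfl, htop, Nat.sub_self, pow_zero, one_mul, hG1]
      · intro b _ hb
        rw [if_neg (fun h => hb (top_le_iff.mp h))]
      · intro h; exact absurd (Finset.mem_univ ⊤) h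
  · have hxt : x < ⊤ := lt_top_iff_ne_top.mpr hx
    have hρx : ρ x < d := by have := hsm x ⊤ hxt; omega
    have hH : H x ⊤ = ∑ z : P,
        if x < z then (Polynomial.X - 1) ^ (ρ z - ρ x - 1) * G z ⊤ else 0 := by
      rw [hGH.2.1 x ⊤ hxt]
      exact Finset.sum_congr rfl fun z _ => by simp [le_top]
    have hdegH : (H x ⊤).natDegree ≤ d - ρ x - 1 := by
      rw [hH]
      refine Polynomial.natDegree_sum_le_of_forall_le _ _ fun z _ => ?_
      by_cases hz : x < z
      · rw [if_pos hz]
        have h1 := (IH z hz).1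
        have h2 : ρ x < ρ z := hsm x z hz
        have h3 : ρ z ≤ d := hled z
        calc ((Polynomial.X - 1) ^ (ρ z - ρ x - 1) * G z ⊤).natDegree
            ≤ ((Polynomial.X - 1 : Polynomial ℤ) ^ (ρ z - ρ x - 1)).natDegree
              + (G z ⊤).natDegree := Polynomial.natDegree_mul_le
          _ ≤ (ρ z - ρ x - 1) + (d - ρ z) :=
              add_le_add (natDegree_X_sub_one_pow_le _) h1
          _ ≤ d - ρ x - 1 := by omega
      · rw [if_neg hz]; simp
    have hreflH : (H x ⊤).reflect (d - ρ x - 1) = H x ⊤ := by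
      rw [hH, reflect_sum']
      have hterm : ∀ z : P,
          (if x < z then (Polynomial.X - 1) ^ (ρ z - ρ x - 1) * G z ⊤ else 0).reflect
              (d - ρ x - 1) =
          if x < z then (1 - Polynomial.X) ^ (ρ z - ρ x - 1) *
              ∑ w : P, (if z ≤ w then (Polynomial.X - 1) ^ (ρ w - ρ z) * G w ⊤ else 0)
            else 0 := by
        intro z
        by_cases hz : x < z
        · rw [if_pos hz, if_pos hz]
          have h2 : ρ x < ρ z := hsm x z hz
          have h3 : ρ z ≤ d := hled z
          have hsplit : d - ρ x - 1 = (ρ z - ρ x - 1) + (d - ρ z) := by omega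
          rw [hsplit, Polynomial.reflect_mul _ _ (natDegree_X_sub_one_pow_le _) (IH z hz).1,
            reflect_X_sub_one_pow, (IH z hz).2]
        · rw [if_neg hz, if_neg hz, Polynomial.reflect_zero]
      rw [Finset.sum_congr rfl fun z _ => hterm z]
      have hsw : ∀ z : P,
          (if x < z then (1 - Polynomial.X) ^ (ρ z - ρ x - 1) *
              ∑ w : P, (if z ≤ w then (Polynomial.X - 1) ^ (ρ w - ρ z) * G w ⊤ else 0)
            else 0) =
          ∑ w : P, if x < z ∧ z ≤ w then (1 - Polynomial.X) ^ (ρ z - ρ x - 1) *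
              ((Polynomial.X - 1) ^ (ρ w - ρ z) * G w ⊤) else 0 := by
        intro z
        by_cases hz : x < z
        · rw [if_pos hz, Finset.mul_sum]
          refine Finset.sum_congr rfl fun w _ => ?_
          by_cases hw : z ≤ w
          · rw [if_pos hw, if_pos ⟨hz, hw⟩]
          · rw [if_neg hw, if_neg (fun hc => hw hc.2), mul_zero]
        · rw [if_neg hz]
          exact (Finset.sum_eq_zero fun w _ => if_neg (fun hc => hz hc.1)).symm
      rw [Finset.sum_congr rfl fun z _ => hsw z, Finset.sum_comm]
      have hinner : ∀ w : P,
          (∑ z : P, if x < z ∧ z ≤ w then (1 - Polynomial.X) ^ (ρ z - ρ x - 1) *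
              ((Polynomial.X - 1) ^ (ρ w - ρ z) * G w ⊤) else 0) =
          if x < w then (Polynomial.X - 1) ^ (ρ w - ρ x - 1) * G w ⊤ else 0 := by
        intro w
        by_cases hw : x < w
        · rw [if_pos hw]
          have hterm2 : ∀ z : P,
              (if x < z ∧ z ≤ w then (1 - Polynomial.X) ^ (ρ z - ρ x - 1) *
                  ((Polynomial.X - 1) ^ (ρ w - ρ z) * G w ⊤) else 0) =
              (if x < z ∧ z ≤ w then Polynomial.C ((-1:ℤ) ^ (ρ z - ρ x - 1)) else 0) *
                ((Polynomial.X - 1) ^ (ρ w - ρ x - 1) * G w ⊤) := by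
            intro z
            by_cases hz : x < z ∧ z ≤ w
            · rw [if_pos hz, if_pos hz]
              have h2 : ρ x < ρ z := hsm _ _ hz.1
              have h4 : ρ z ≤ ρ w := hmono hz.2
              have hpow : (1 - Polynomial.X : Polynomial ℤ) ^ (ρ z - ρ x - 1) =
                  Polynomial.C ((-1:ℤ) ^ (ρ z - ρ x - 1)) *
                    (Polynomial.X - 1) ^ (ρ z - ρ x - 1) := by
                have hneg : (1 - Polynomial.X : Polynomial ℤ) = -(Polynomial.X - 1) := by ring
                rw [hneg, neg_pow]
                congr 1
                simp [map_pow]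
              rw [hpow]
              have hexp : (ρ z - ρ x - 1) + (ρ w - ρ z) = ρ w - ρ x - 1 := by omega
              rw [← hexp, pow_add]
              ring
            · rw [if_neg hz, if_neg hz, zero_mul]
          rw [Finset.sum_congr rfl fun z _ => hterm2 z, ← Finset.sum_mul]
          have hC : (∑ z : P, if x < z ∧ z ≤ w then
              Polynomial.C ((-1:ℤ) ^ (ρ z - ρ x - 1)) else 0) = 1 := by
            have e1 : ∀ z : P, (if x < z ∧ z ≤ w then
                Polynomial.C ((-1:ℤ) ^ (ρ z - ρ x - 1)) else (0 : Polynomial ℤ)) =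
                Polynomial.C (if x < z ∧ z ≤ w then ((-1:ℤ) ^ (ρ z - ρ x - 1)) else 0) := by
              intro z
              by_cases hc : x < z ∧ z ≤ w
              · rw [if_pos hc, if_pos hc]
              · rw [if_neg hc, if_neg hc, map_zero]
            rw [Finset.sum_congr rfl fun z _ => e1 z, ← map_sum,
              eulerian_sum hE hsm hw, map_one]
          rw [hC, one_mul]
        · rw [if_neg hw]
          exact Finset.sum_eq_zero fun z _ =>
            if_neg (fun hc => hw (lt_of_lt_of_le hc.1 hc.2))
      rw [Finset.sum_congr rfl fun w _ => hinner w, ← hH]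
    -- f = (1-X) * H x ⊤
    have hdegf : ((1 - Polynomial.X) * H x ⊤).natDegree ≤ d - ρ x := by
      calc ((1 - Polynomial.X) * H x ⊤).natDegree
          ≤ (1 - Polynomial.X : Polynomial ℤ).natDegree + (H x ⊤).natDegree :=
            Polynomial.natDegree_mul_le
        _ ≤ 1 + (d - ρ x - 1) := add_le_add natDegree_one_sub_X_le hdegH
        _ ≤ d - ρ x := by omega
    have hreflf : ((1 - Polynomial.X) * H x ⊤).reflect (d - ρ x) =
        - ((1 - Polynomial.X) * H x ⊤) := by
      rw [show d - ρ x = 1 + (d - ρ x - 1) from by omega,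
        Polynomial.reflect_mul _ _ natDegree_one_sub_X_le hdegH, reflect_one_sub_X, hreflH]
      ring
    have hGdef : G x ⊤ = truncLtHalf (d - ρ x) ((1 - Polynomial.X) * H x ⊤) := by
      have h := hGH.2.2 x ⊤ hxt
      rwa [htop] at h
    have hanti : ∀ i, i ≤ d - ρ x →
        ((1 - Polynomial.X) * H x ⊤).coeff (d - ρ x - i) =
          - ((1 - Polynomial.X) * H x ⊤).coeff i := by
      intro i hi
      have h := congrArg (fun p => Polynomial.coeff p i) hreflf
      simp only [Polynomial.coeff_reflect, Polynomial.coeff_neg] at h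
      rwa [Polynomial.revAt_le hi] at h
    have hfhigh : ∀ i, d - ρ x < i → ((1 - Polynomial.X) * H x ⊤).coeff i = 0 :=
      fun i hi => Polynomial.coeff_eq_zero_of_natDegree_lt (lt_of_le_of_lt hdegf hi)
    have hdegG : (G x ⊤).natDegree ≤ d - ρ x := by
      rw [hGdef]
      refine Polynomial.natDegree_le_iff_coeff_eq_zero.mpr fun m hm => ?_
      rw [coeff_truncLtHalf, if_neg (by omega)]
    refine ⟨hdegG, ?_⟩
    have hre : (G x ⊤).reflect (d - ρ x) = G x ⊤ - (1 - Polynomial.X) * H x ⊤ := by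
      ext i
      rw [Polynomial.coeff_reflect, Polynomial.coeff_sub]
      by_cases hi : i ≤ d - ρ x
      · rw [Polynomial.revAt_le hi, hGdef, coeff_truncLtHalf, coeff_truncLtHalf]
        rcases lt_trichotomy (2 * i) (d - ρ x) with h | h | h
        · rw [if_neg (by omega), if_pos h, sub_self]
        · rw [if_neg (by omega), if_neg (by omega)]
          have hii : d - ρ x - i = i := by omega
          have := hanti i hi
          rw [hii] at this
          omega
        · rw [if_pos (by omega), if_neg (by omega), hanti i hi]
          ring
      · push_neg at hi
        rw [Polynomial.revAt_eq_self_of_lt hi, hGdef, coeff_truncLtHalf,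
          if_neg (by omega), hfhigh i hi]
        ring
    rw [hre]
    have hsplit2 : ∀ z : P, (if x ≤ z then (Polynomial.X - 1) ^ (ρ z - ρ x) * G z ⊤ else 0) =
        (if z = x then (Polynomial.X - 1) ^ (ρ z - ρ x) * G z ⊤ else 0) +
        (if x < z then (Polynomial.X - 1) ^ (ρ z - ρ x) * G z ⊤ else 0) := by
      intro z
      rcases eq_or_ne z x with rfl | hz
      · simp [lt_irrefl]
      · rw [if_neg hz, zero_add]
        by_cases hc : x ≤ z
        · rw [if_pos hc, if_pos (lt_of_le_of_ne hc (Ne.symm hz))]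
        · rw [if_neg hc, if_neg (fun h => hc (le_of_lt h))]
    rw [Finset.sum_congr rfl fun z _ => hsplit2 z, Finset.sum_add_distrib,
      Finset.sum_ite_eq' Finset.univ x
        (fun z => (Polynomial.X - 1) ^ (ρ z - ρ x) * G z ⊤)]
    have h2nd : (∑ z : P, if x < z then (Polynomial.X - 1) ^ (ρ z - ρ x) * G z ⊤ else 0) =
        (Polynomial.X - 1) * H x ⊤ := by
      rw [hH, Finset.mul_sum]
      refine Finset.sum_congr rfl fun z _ => ?_
      by_cases hz : x < z
      · rw [if_pos hz, if_pos hz]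
        have h2 : ρ x < ρ z := hsm x z hz
        obtain ⟨n, hn⟩ : ∃ n, ρ z - ρ x = n + 1 := ⟨ρ z - ρ x - 1, by omega⟩
        rw [hn]
        simp only [Nat.add_sub_cancel, pow_succ]
        ring
      · rw [if_neg hz, if_neg hz, mul_zero]
    rw [h2nd]
    simp only [Finset.mem_univ, if_pos, Nat.sub_self, pow_zero, one_mul]
    ring

/-- For an Eulerian poset `P` of rank `d ≥ 0`, one has
`t^d G(P,t⁻¹) = ∑_{⊥ ≤ x ≤ ⊤} (t-1)^(ρ(x)) G([x,⊤],t)`; the left-hand side is the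
reflection of `G(P,t)` at degree `d`. -/
theorem G_reflect_formula {P : Type*} [PartialOrder P] [BoundedOrder P] [Fintype P]
    (ρ : P → ℕ) (d : ℕ) (hrk : IsRankFunction ρ d) (hE : IsEulerian ρ)
    (G H : P → P → Polynomial ℤ) (hGH : GHSystem ρ G H) :
    (G ⊥ ⊤).reflect d = ∑ x : P, (Polynomial.X - 1) ^ (ρ x) * G x ⊤ := by
  have h := (key_induction ρ d hrk hE G H hGH ⊥).2
  rw [hrk.1, Nat.sub_zero] at h
  rw [h]
  refine Finset.sum_congr rfl fun z _ => ?_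
  rw [if_pos bot_le, Nat.sub_zero]
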